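/- Let X, Y be locally solid vector lattices with Y Hausdorff, and let (T_α) be a net of disjointness preserving linear operators from X to Y converging pointwise (in the topology of Y) to a linear operator T. Then T is disjointness preserving. -/

import Mathlib

open Filter Topology Bornology Function Pointwise

/-- A set in a lattice-ordered group is solid if it contains every element
dominated in absolute value by one of its members. -/
def Solid {X : Type*} [Lattice X] [AddCommGroup X] (S : Set X) : Prop :=
  ∀ x y : X, |x| ≤ |y| → y ∈ S → x ∈ S

/-- The linear topology is locally solid: it admits a base at zero of solid sets. -/
def LocallySolid (X : Type*) [Lattice X] [AddCommGroup X] [TopologicalSpace X] : Prop :=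
  ∀ V ∈ 𝓝 (0 : X), ∃ U ∈ 𝓝 (0 : X), Solid U ∧ U ⊆ V

/-- Archimedean property of a vector lattice. -/
def ArchimedeanVL (X : Type*) [Lattice X] [AddCommGroup X] : Prop :=
  ∀ x y : X, (∀ n : ℕ, n • x ≤ y) → x ≤ 0

/-- A band preserving operator. -/
def BandPreserving {X : Type*} [Lattice X] [AddCommGroup X] [Module ℝ X]
    (T : X →ₗ[ℝ] X) : Prop :=
  ∀ x y : X, |x| ⊓ |y| = 0 → |T x| ⊓ |y| = 0

/-- An order bounded operator: it maps order intervals into order intervals. -/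
def OrderBounded {X : Type*} [Lattice X] [AddCommGroup X] [Module ℝ X]
    (T : X →ₗ[ℝ] X) : Prop :=
  ∀ a b : X, ∃ c d : X, T '' Set.Icc a b ⊆ Set.Icc c d

/-- An orthomorphism: an order bounded band preserving operator. -/
def Orthomorphism {X : Type*} [Lattice X] [AddCommGroup X] [Module ℝ X]
    (T : X →ₗ[ℝ] X) : Prop :=
  OrderBounded T ∧ BandPreserving T

/-- An `nb`-bounded operator: it maps some zero neighborhood to a topologically
bounded set. -/
def NbBounded {X : Type*} [Lattice X] [AddCommGroup X] [Module ℝ X]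
    [TopologicalSpace X] (T : X →ₗ[ℝ] X) : Prop :=
  ∃ U ∈ 𝓝 (0 : X), IsVonNBounded ℝ (T '' U)

/-- A `bb`-bounded operator: it maps topologically bounded sets to bounded sets. -/
def BbBounded {X : Type*} [Lattice X] [AddCommGroup X] [Module ℝ X]
    [TopologicalSpace X] (T : X →ₗ[ℝ] X) : Prop :=
  ∀ B : Set X, IsVonNBounded ℝ B → IsVonNBounded ℝ (T '' B)

/-- A disjointness preserving operator between vector lattices. -/
def DisjointnessPreserving {X Y : Type*} [Lattice X] [AddCommGroup X] [Module ℝ X]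
    [Lattice Y] [AddCommGroup Y] [Module ℝ Y] (T : X →ₗ[ℝ] Y) : Prop :=
  ∀ x y : X, |x| ⊓ |y| = 0 → |T x| ⊓ |T y| = 0

/-- a pointwise limit of disjointness preserving operators into a
Hausdorff locally solid vector lattice is disjointness preserving. -/
theorem pointwise_limit_disjointnessPreserving {X Y : Type*}
    [Lattice X] [AddCommGroup X] [Module ℝ X] [TopologicalSpace X]
    [Lattice Y] [AddCommGroup Y] [Module ℝ Y] [TopologicalSpace Y]
    [IsTopologicalAddGroup Y] [ContinuousSMul ℝ Y]
    [CovariantClass Y Y (· + ·) (· ≤ ·)] [T2Space Y]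
    (hlsX : LocallySolid X) (hlsY : LocallySolid Y)
    {ι : Type*} (l : Filter ι) [l.NeBot]
    (Tnet : ι → (X →ₗ[ℝ] Y))
    (hdp : ∀ a : ι, DisjointnessPreserving (Tnet a))
    (T : X →ₗ[ℝ] Y)
    (hconv : ∀ x : X, Tendsto (fun a => Tnet a x) l (𝓝 (T x))) :
    DisjointnessPreserving T := by
  intro x y hxy
  set z : Y := |T x| ⊓ |T y| with hz
  -- it suffices to show z ∈ V for every neighborhood V of 0
  have key : ∀ V ∈ 𝓝 (0 : Y), z ∈ V := by
    intro V hV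
    obtain ⟨S, hS, hSsolid, hSV⟩ := hlsY V hV
    obtain ⟨W, hW, hWW⟩ := exists_nhds_zero_half hS
    obtain ⟨U, hU, hUsolid, hUW⟩ := hlsY W hW
    -- eventually Tnet a x - T x ∈ U and Tnet a y - T y ∈ U
    have hx' : ∀ᶠ a in l, Tnet a x - T x ∈ U :=
      ((hconv x).sub_const (T x)).eventually_mem (by simpa using hU)
    have hy' : ∀ᶠ a in l, Tnet a y - T y ∈ U :=
      ((hconv y).sub_const (T y)).eventually_mem (by simpa using hU)
    obtain ⟨a, hax, hay⟩ := (hx'.and hy').exists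
    -- Birkhoff-type estimate
    have hdpz : |Tnet a x| ⊓ |Tnet a y| = 0 := hdp a x y hxy
    have hb : |z| ≤ |T x - Tnet a x| + |T y - Tnet a y| := by
      have e3 := abs_add_le ((|T x| ⊓ |T y|) - (|Tnet a x| ⊓ |T y|))
        ((|Tnet a x| ⊓ |T y|) - (|Tnet a x| ⊓ |Tnet a y|))
      rw [sub_add_sub_cancel] at e3
      have e1 : |(|T x| ⊓ |T y|) - (|Tnet a x| ⊓ |T y|)| ≤ |(|T x|) - (|Tnet a x|)| :=
        abs_inf_sub_inf_le_abs _ _ _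
      have e2 : |(|Tnet a x| ⊓ |T y|) - (|Tnet a x| ⊓ |Tnet a y|)| ≤
          |(|T y|) - (|Tnet a y|)| := by
        rw [inf_comm (|Tnet a x|), inf_comm (|Tnet a x|)]
        exact abs_inf_sub_inf_le_abs _ _ _
      have h1 : |z| = |(|T x| ⊓ |T y|) - (|Tnet a x| ⊓ |Tnet a y|)| := by
        rw [hdpz, sub_zero]
      rw [h1]
      exact e3.trans <| (add_le_add e1 e2).trans <|
        add_le_add (abs_abs_sub_abs_le _ _) (abs_abs_sub_abs_le _ _)
    -- the bound lies in S
    have hmemx : |T x - Tnet a x| ∈ W := by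
      refine hUW (hUsolid |T x - Tnet a x| (Tnet a x - T x) ?_ hax)
      rw [abs_abs, abs_sub_comm]
    have hmemy : |T y - Tnet a y| ∈ W := by
      refine hUW (hUsolid |T y - Tnet a y| (Tnet a y - T y) ?_ hay)
      rw [abs_abs, abs_sub_comm]
    have hsumS : |T x - Tnet a x| + |T y - Tnet a y| ∈ S :=
      hWW _ hmemx _ hmemy
    -- solidity of S gives z ∈ S ⊆ V
    refine hSV (hSsolid z (|T x - Tnet a x| + |T y - Tnet a y|) ?_ hsumS)
    calc |z| ≤ |T x - Tnet a x| + |T y - Tnet a y| := hb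
      _ = |(|T x - Tnet a x| + |T y - Tnet a y|)| :=
        (abs_of_nonneg (add_nonneg (abs_nonneg _) (abs_nonneg _))).symm
  -- Hausdorff: z = 0
  by_contra hzne
  have h0 : (0 : Y) ∈ ({z}ᶜ : Set Y) := fun h => hzne (by simpa using h.symm)
  have : z ∈ ({z}ᶜ : Set Y) :=
    key _ (IsOpen.mem_nhds isOpen_compl_singleton h0)
  exact this rfl
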